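/- arXiv:1706.09348 — 3 statements merged into one kernel-verified Lean document; each statement's English description precedes it below -/
import Mathlib

section
/- Let Λ be a real vector space with a nondegenerate symmetric bilinear form of signature (3, m), m ≥ 3. If W₁ and W₂ are 3-dimensional positive definite subspaces with W₁ ∩ W₂ = 0, then W₁ + W₂ is 6-dimensional and the form restricted to W₁ + W₂ is nondegenerate of signature (3, 3). -/
/-- A symmetric bilinear form on a real vector space has signature `(p, q)` if the space
admits an orthogonal basis with `p` vectors of positive norm and `q` vectors of negative
norm. -/
def HasSignature {V : Type*} [AddCommGroup V] [Module ℝ V]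
    (B : V →ₗ[ℝ] V →ₗ[ℝ] ℝ) (p q : ℕ) : Prop :=
  ∃ b : Module.Basis (Fin p ⊕ Fin q) ℝ V,
    (∀ i j, i ≠ j → B (b i) (b j) = 0) ∧
    (∀ i, 0 < B (b (Sum.inl i)) (b (Sum.inl i))) ∧
    (∀ j, B (b (Sum.inr j)) (b (Sum.inr j)) < 0)

open Module

/-- Pairing against an orthogonal basis vector picks out one coordinate. -/
lemma apply_orth_basis {V : Type*} [AddCommGroup V] [Module ℝ V] {ι : Type*} [Fintype ι]
    [DecidableEq ι]
    (B : V →ₗ[ℝ] V →ₗ[ℝ] ℝ) (b : Basis ι ℝ V)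
    (horth : ∀ i j, i ≠ j → B (b i) (b j) = 0) (x : V) (k : ι) :
    B x (b k) = b.repr x k * B (b k) (b k) := by
  conv_lhs => rw [← b.sum_repr x]
  rw [map_sum, LinearMap.sum_apply, Finset.sum_eq_single k]
  · simp [smul_eq_mul]
  · intro i _ hik
    simp [horth i k hik]
  · simp


/-- Self-pairing in terms of coordinates for an orthogonal basis. -/
lemma self_apply_orth_basis {V : Type*} [AddCommGroup V] [Module ℝ V] {ι : Type*} [Fintype ι]
    [DecidableEq ι]
    (B : V →ₗ[ℝ] V →ₗ[ℝ] ℝ) (b : Basis ι ℝ V)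
    (horth : ∀ i j, i ≠ j → B (b i) (b j) = 0) (x : V) :
    B x x = ∑ k, b.repr x k * (b.repr x k * B (b k) (b k)) := by
  have hbk : ∀ k, B (b k) x = b.repr x k * B (b k) (b k) := by
    intro k
    conv_lhs => rw [← b.sum_repr x]
    rw [map_sum, Finset.sum_eq_single k]
    · simp [smul_eq_mul]
    · intro i _ hik
      simp [horth k i (Ne.symm hik)]
    · simp
  nth_rewrite 1 [← b.sum_repr x]
  rw [map_sum, LinearMap.sum_apply]
  refine Finset.sum_congr rfl fun k _ => ?_
  rw [map_smul, LinearMap.smul_apply, smul_eq_mul, hbk k]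

/-- A positive semidefinite subspace of a space of signature `(3, m)` has dimension ≤ 3. -/
lemma semidef_finrank_le {Λ : Type*} [AddCommGroup Λ] [Module ℝ Λ] [FiniteDimensional ℝ Λ]
    {m : ℕ} (B : Λ →ₗ[ℝ] Λ →ₗ[ℝ] ℝ) (hsig : HasSignature B 3 m)
    (S : Submodule ℝ Λ) (hS : ∀ s ∈ S, 0 ≤ B s s) :
    Module.finrank ℝ S ≤ 3 := by
  classical
  obtain ⟨b, horth, hpos, hneg⟩ := hsig
  set f : Λ →ₗ[ℝ] (Fin 3 → ℝ) := LinearMap.pi (fun i => B.flip (b (Sum.inl i))) with hf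
  have hinj : Function.Injective (f.comp S.subtype) := by
    rw [← LinearMap.ker_eq_bot, LinearMap.ker_eq_bot']
    intro x hx
    have hx' : ∀ i, B (x : Λ) (b (Sum.inl i)) = 0 := by
      intro i
      have := congrFun (congrArg (fun g => g) hx) i
      simpa [hf, LinearMap.pi_apply] using congrFun (show f (x : Λ) = 0 from hx) i
    have hcl : ∀ i, b.repr (x : Λ) (Sum.inl i) = 0 := by
      intro i
      have h0 := hx' i
      rw [apply_orth_basis B b horth] at h0
      exact (mul_eq_zero.mp h0).resolve_right (hpos i).ne'
    have hxx : B (x : Λ) (x : Λ) =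
        ∑ k, b.repr (x : Λ) k * (b.repr (x : Λ) k * B (b k) (b k)) :=
      self_apply_orth_basis B b horth (x : Λ)
    have hsum : B (x : Λ) (x : Λ) =
        ∑ j : Fin m, b.repr (x : Λ) (Sum.inr j) *
          (b.repr (x : Λ) (Sum.inr j) * B (b (Sum.inr j)) (b (Sum.inr j))) := by
      rw [hxx, Fintype.sum_sum_type]
      simp [hcl]
    have hnonpos : ∀ j : Fin m, b.repr (x : Λ) (Sum.inr j) *
        (b.repr (x : Λ) (Sum.inr j) * B (b (Sum.inr j)) (b (Sum.inr j))) ≤ 0 := by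
      intro j
      have := hneg j
      nlinarith [sq_nonneg (b.repr (x : Λ) (Sum.inr j))]
    have hle : B (x : Λ) (x : Λ) ≤ 0 := by
      rw [hsum]; exact Finset.sum_nonpos fun j _ => hnonpos j
    have heq : B (x : Λ) (x : Λ) = 0 := le_antisymm hle (hS _ x.2)
    have hcr : ∀ j, b.repr (x : Λ) (Sum.inr j) = 0 := by
      intro j
      have h0 : ∀ j ∈ Finset.univ, b.repr (x : Λ) (Sum.inr j) *
          (b.repr (x : Λ) (Sum.inr j) * B (b (Sum.inr j)) (b (Sum.inr j))) = 0 :=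
        (Finset.sum_eq_zero_iff_of_nonpos (fun j _ => hnonpos j)).mp (by rw [← hsum, heq])
      have h1 := h0 j (Finset.mem_univ j)
      rcases mul_eq_zero.mp h1 with h | h
      · exact h
      · rcases mul_eq_zero.mp h with h' | h'
        · exact h'
        · exact absurd h' (hneg j).ne
    have : b.repr (x : Λ) = 0 := by
      ext k
      rcases k with i | j
      · simpa using hcl i
      · simpa using hcr j
    have : (x : Λ) = 0 := by
      have := congrArg b.repr.symm this
      simpa using this
    exact Subtype.ext this
  calc Module.finrank ℝ S ≤ Module.finrank ℝ (Fin 3 → ℝ) :=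
        LinearMap.finrank_le_finrank_of_injective hinj
    _ = 3 := by simp

set_option maxHeartbeats 1000000 in
/-- If `W₁`, `W₂` are 3-dimensional positive definite subspaces of a real quadratic space of
signature `(3, m)`, `m ≥ 3`, with `W₁ ∩ W₂ = 0`, then `W₁ + W₂` is 6-dimensional and the
restriction of the form to `W₁ + W₂` is nondegenerate of signature `(3, 3)`. -/
theorem stmt3 {Λ : Type*} [AddCommGroup Λ] [Module ℝ Λ] [FiniteDimensional ℝ Λ]
    (m : ℕ) (hm : 3 ≤ m) (B : Λ →ₗ[ℝ] Λ →ₗ[ℝ] ℝ)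
    (hsymm : ∀ x y, B x y = B y x)
    (hsig : HasSignature B 3 m)
    (W₁ W₂ : Submodule ℝ Λ)
    (h1 : Module.finrank ℝ W₁ = 3) (h2 : Module.finrank ℝ W₂ = 3)
    (hpos1 : ∀ w ∈ W₁, w ≠ 0 → 0 < B w w)
    (hpos2 : ∀ w ∈ W₂, w ≠ 0 → 0 < B w w)
    (hint : W₁ ⊓ W₂ = ⊥) :
    Module.finrank ℝ ↥(W₁ ⊔ W₂) = 6 ∧
    (∀ u : ↥(W₁ ⊔ W₂), (∀ u' : ↥(W₁ ⊔ W₂),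
      LinearMap.BilinForm.restrict B (W₁ ⊔ W₂) u u' = 0) → u = 0) ∧
    HasSignature (LinearMap.BilinForm.restrict B (W₁ ⊔ W₂)) 3 3 := by
  classical
  set V : Submodule ℝ Λ := W₁ ⊔ W₂ with hV
  set B' : ↥V →ₗ[ℝ] ↥V →ₗ[ℝ] ℝ := LinearMap.BilinForm.restrict B V with hB'
  have hB'app : ∀ u u' : ↥V, B' u u' = B (u : Λ) (u' : Λ) := fun u u' => rfl
  -- dimension of V
  have hdimV : Module.finrank ℝ ↥V = 6 := by
    rw [hV]
    have e1 := Submodule.finrank_sup_add_finrank_inf_eq W₁ W₂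
    have e2 : Module.finrank ℝ ↥(W₁ ⊓ W₂) = 0 := by rw [hint]; exact finrank_bot ℝ Λ
    omega
  have hsymm' : B'.IsSymm := by
    constructor
    intro x y
    simp only [RingHom.id_apply]
    exact hsymm _ _
  have hrefl : B'.IsRefl := hsymm'.isRefl
  -- the image of W₁ inside V
  have hle1 : W₁ ≤ V := le_sup_left
  set W : Submodule ℝ ↥V := W₁.comap V.subtype with hW
  have hmemW : ∀ x : ↥V, x ∈ W ↔ (x : Λ) ∈ W₁ := fun x => Iff.rfl
  have hdimW : Module.finrank ℝ ↥W = 3 := by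
    rw [(Submodule.comapSubtypeEquivOfLe hle1).finrank_eq, h1]
  have hposW : ∀ x : ↥V, x ∈ W → x ≠ 0 → 0 < B' x x := by
    intro x hx hx0
    exact hpos1 (x : Λ) hx (fun h => hx0 (Subtype.ext h))
  have hndW : (LinearMap.BilinForm.restrict B' W).Nondegenerate := by
    suffices hsl : (LinearMap.BilinForm.restrict B' W).SeparatingLeft from
      ⟨hsl, fun x hx => hsl x (fun y => by rw [← hx y]; exact hsymm _ _)⟩
    intro x hx
    by_contra hx0
    have h0 : (LinearMap.BilinForm.restrict B' W) x x = 0 := hx x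
    have : (0 : ℝ) < (LinearMap.BilinForm.restrict B' W) x x :=
      hposW (x : ↥V) x.2 (fun h => hx0 (Subtype.ext h))
    linarith
  have hcompl : IsCompl W (LinearMap.BilinForm.orthogonal B' W) :=
    (LinearMap.BilinForm.restrict_nondegenerate_iff_isCompl_orthogonal hrefl).mp hndW
  set C : Submodule ℝ ↥V := LinearMap.BilinForm.orthogonal B' W with hC
  have hdimC : Module.finrank ℝ ↥C = 3 := by
    have := Submodule.finrank_add_eq_of_isCompl hcompl
    rw [hdimW, hdimV] at this
    omega
  have horthWC : ∀ x : ↥V, x ∈ C → ∀ w : ↥V, w ∈ W → B' w x = 0 := by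
    intro x hx w hw
    exact (LinearMap.BilinForm.mem_orthogonal_iff.mp hx) w hw
  -- negative definiteness on C
  have hnegC : ∀ x : ↥V, x ∈ C → x ≠ 0 → B' x x < 0 := by
    intro x hxC hx0
    by_contra hge
    push_neg at hge
    have hx0' : (x : Λ) ≠ 0 := fun h => hx0 (Subtype.ext h)
    have hxW₁ : (x : Λ) ∉ W₁ := by
      intro hmem
      have h0 : B' x x = 0 := horthWC x hxC x hmem
      have := hpos1 (x : Λ) hmem hx0'
      rw [hB'app] at h0
      linarith
    set S : Submodule ℝ Λ := W₁ ⊔ (ℝ ∙ (x : Λ)) with hS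
    have hsemi : ∀ s ∈ S, 0 ≤ B s s := by
      intro s hs
      obtain ⟨w, hw, z, hz, rfl⟩ := Submodule.mem_sup.mp hs
      obtain ⟨t, rfl⟩ := Submodule.mem_span_singleton.mp hz
      have hwx : B w (x : Λ) = 0 := by
        have hwV : w ∈ V := hle1 hw
        exact horthWC x hxC ⟨w, hwV⟩ hw
      have hxw : B (x : Λ) w = 0 := by rw [hsymm]; exact hwx
      have hww : 0 ≤ B w w := by
        rcases eq_or_ne w 0 with rfl | h
        · simp
        · exact (hpos1 w hw h).le
      have hxx : 0 ≤ B (x : Λ) (x : Λ) := by rw [← hB'app]; exact hge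
      have expand : B (w + t • (x : Λ)) (w + t • (x : Λ)) =
          B w w + t ^ 2 * B (x : Λ) (x : Λ) := by
        simp [map_add, LinearMap.add_apply, map_smul, LinearMap.smul_apply,
          smul_eq_mul, hwx, hxw]
        ring
      rw [expand]
      nlinarith [sq_nonneg t]
    have hle3 := semidef_finrank_le B hsig S hsemi
    have hinf : W₁ ⊓ (ℝ ∙ (x : Λ)) = ⊥ := by
      rw [eq_bot_iff]
      rintro y ⟨hy1, hy2⟩
      obtain ⟨t, rfl⟩ := Submodule.mem_span_singleton.mp hy2
      rcases eq_or_ne t 0 with rfl | ht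
      · simp
      · exact absurd ((W₁.smul_mem_iff ht).mp hy1) hxW₁
    have hdimS : Module.finrank ℝ ↥S = 4 := by
      rw [hS]
      have e1 := Submodule.finrank_sup_add_finrank_inf_eq W₁ (ℝ ∙ (x : Λ))
      have e2 : Module.finrank ℝ ↥(W₁ ⊓ (ℝ ∙ (x : Λ))) = 0 := by
        rw [hinf]; exact finrank_bot ℝ Λ
      have e3 : Module.finrank ℝ ↥(ℝ ∙ (x : Λ)) = 1 := finrank_span_singleton hx0'
      omega
    omega
  -- orthogonal bases of W and C
  obtain ⟨v₁, hv₁⟩ := LinearMap.BilinForm.exists_orthogonal_basis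
    (B := LinearMap.BilinForm.restrict B' W) (by constructor; intro x y; exact hsymm _ _)
  obtain ⟨v₂, hv₂⟩ := LinearMap.BilinForm.exists_orthogonal_basis
    (B := LinearMap.BilinForm.restrict B' C) (by constructor; intro x y; exact hsymm _ _)
  set e₁ : Fin (finrank ℝ ↥W) ≃ Fin 3 := finCongr hdimW with he₁
  set e₂ : Fin (finrank ℝ ↥C) ≃ Fin 3 := finCongr hdimC with he₂
  set u₁ : Basis (Fin 3) ℝ ↥W := v₁.reindex e₁ with hu₁
  set u₂ : Basis (Fin 3) ℝ ↥C := v₂.reindex e₂ with hu₂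
  set bV : Basis (Fin 3 ⊕ Fin 3) ℝ ↥V :=
    (u₁.prod u₂).map (Submodule.prodEquivOfIsCompl W C hcompl) with hbV
  have hbVinl : ∀ i, bV (Sum.inl i) = ((u₁ i : ↥W) : ↥V) := by
    intro i
    simp [hbV, Basis.map_apply, Basis.prod_apply, Submodule.coe_prodEquivOfIsCompl]
  have hbVinr : ∀ j, bV (Sum.inr j) = ((u₂ j : ↥C) : ↥V) := by
    intro j
    simp [hbV, Basis.map_apply, Basis.prod_apply, Submodule.coe_prodEquivOfIsCompl]
  have horthV : ∀ i j, i ≠ j → B' (bV i) (bV j) = 0 := by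
    rintro (i | i) (j | j) hij
    · rw [hbVinl, hbVinl]
      have : (LinearMap.BilinForm.restrict B' W) (u₁ i) (u₁ j) = 0 := by
        simp only [hu₁, Module.Basis.reindex_apply]
        exact hv₁ (by simpa using fun h => hij (by simp [h]))
      simpa using this
    · rw [hbVinl, hbVinr]
      exact horthWC _ (u₂ j).2 _ (u₁ i).2
    · rw [hbVinr, hbVinl]
      exact hrefl _ _ (horthWC _ (u₂ i).2 _ (u₁ j).2)
    · rw [hbVinr, hbVinr]
      have : (LinearMap.BilinForm.restrict B' C) (u₂ i) (u₂ j) = 0 := by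
        simp only [hu₂, Module.Basis.reindex_apply]
        exact hv₂ (by simpa using fun h => hij (by simp [h]))
      simpa using this
  have hposV : ∀ i, 0 < B' (bV (Sum.inl i)) (bV (Sum.inl i)) := by
    intro i
    rw [hbVinl]
    exact hposW _ (u₁ i).2 (fun h => (u₁.ne_zero i) (Subtype.ext h))
  have hnegV : ∀ j, B' (bV (Sum.inr j)) (bV (Sum.inr j)) < 0 := by
    intro j
    rw [hbVinr]
    exact hnegC _ (u₂ j).2 (fun h => (u₂.ne_zero j) (Subtype.ext h))
  refine ⟨hdimV, ?_, ⟨bV, horthV, hposV, hnegV⟩⟩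
  intro u hu
  have hcoord : ∀ k, bV.repr u k = 0 := by
    intro k
    have h0 : B' u (bV k) = 0 := hu (bV k)
    rw [apply_orth_basis B' bV horthV] at h0
    have hdk : B' (bV k) (bV k) ≠ 0 := by
      rcases k with i | j
      · exact (hposV i).ne'
      · exact (hnegV j).ne
    exact (mul_eq_zero.mp h0).resolve_right hdk
  have : bV.repr u = 0 := by ext k; simpa using hcoord k
  have := congrArg bV.repr.symm this
  simpa using this
end

section
/- Let q be the quadratic form q(x) = x₀² − x₁² − ⋯ − x_{n}² on ℝ^{n+1} with n ≥ 1. Then the level set {x ∈ ℝ^{n+1} : q(x) = 1} has exactly two path components, distinguished by the sign of x₀. -/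
/-- For the quadratic form `q(x) = x₀² − x₁² − ⋯ − xₙ²` on `ℝ^{n+1}` with `n ≥ 1`, the level
set `S = {q = 1}` (the two-sheeted hyperboloid) has exactly two path components,
distinguished by the sign of `x₀`: the sets `{x ∈ S | x₀ > 0}` and `{x ∈ S | x₀ < 0}` are
each path-connected, they are disjoint, they cover `S`, and no two points lying in distinct
pieces can be joined by a path inside `S`. -/
theorem stmt5 (n : ℕ) (hn : 1 ≤ n) :
    ∀ S : Set (Fin (n + 1) → ℝ),
      S = {x | (x 0) ^ 2 - ∑ i : Fin n, (x i.succ) ^ 2 = 1} →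
      IsPathConnected {x ∈ S | 0 < x 0} ∧
      IsPathConnected {x ∈ S | x 0 < 0} ∧
      {x ∈ S | 0 < x 0} ∪ {x ∈ S | x 0 < 0} = S ∧
      Disjoint {x ∈ S | 0 < x 0} {x ∈ S | x 0 < 0} ∧
      (∀ x ∈ S, ∀ y ∈ S, 0 < x 0 → y 0 < 0 → ¬ JoinedIn S x y) := by
  intro S hS
  subst hS
  set f : (Fin n → ℝ) → (Fin (n + 1) → ℝ) :=
    fun y => Fin.cons (Real.sqrt (1 + ∑ i, y i ^ 2)) y with hf
  have hsumnn : ∀ y : Fin n → ℝ, (0:ℝ) ≤ ∑ i, y i ^ 2 :=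
    fun y => Finset.sum_nonneg fun i _ => sq_nonneg _
  have hfc : Continuous f := by
    apply continuous_pi
    intro j
    refine Fin.cases ?_ ?_ j
    · simp only [hf, Fin.cons_zero]
      exact Real.continuous_sqrt.comp (by continuity)
    · intro i
      simp only [hf, Fin.cons_succ]
      exact continuous_apply i
  have hpos : {x ∈ {x : Fin (n+1) → ℝ | (x 0) ^ 2 - ∑ i : Fin n, (x i.succ) ^ 2 = 1} | 0 < x 0}
      = f '' Set.univ := by
    ext x
    constructor
    · rintro ⟨hx, hx0⟩
      refine ⟨Fin.tail x, trivial, ?_⟩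
      have h1 : 1 + ∑ i, (Fin.tail x) i ^ 2 = (x 0) ^ 2 := by
        simp only [Fin.tail]
        simp only [Set.mem_setOf_eq] at hx
        linarith
      have : Real.sqrt (1 + ∑ i, (Fin.tail x) i ^ 2) = x 0 := by
        rw [h1, Real.sqrt_sq hx0.le]
      simp only [hf]
      rw [this, Fin.cons_self_tail]
    · rintro ⟨y, -, rfl⟩
      have h1 : (0:ℝ) < 1 + ∑ i, y i ^ 2 := by linarith [hsumnn y]
      have hsq : Real.sqrt (1 + ∑ i, y i ^ 2) ^ 2 = 1 + ∑ i, y i ^ 2 :=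
        Real.sq_sqrt h1.le
      constructor
      · simp only [hf, Set.mem_setOf_eq, Fin.cons_zero, Fin.cons_succ, hsq]
        ring
      · simp only [hf, Fin.cons_zero]
        exact Real.sqrt_pos.mpr h1
  have hnegset : {x ∈ {x : Fin (n+1) → ℝ | (x 0) ^ 2 - ∑ i : Fin n, (x i.succ) ^ 2 = 1} | x 0 < 0}
      = (fun x : Fin (n+1) → ℝ => -x) ''
        {x ∈ {x : Fin (n+1) → ℝ | (x 0) ^ 2 - ∑ i : Fin n, (x i.succ) ^ 2 = 1} | 0 < x 0} := by
    ext x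
    constructor
    · rintro ⟨hx, hx0⟩
      refine ⟨-x, ⟨?_, ?_⟩, by simp⟩
      · simp only [Set.mem_setOf_eq, Pi.neg_apply, neg_sq] at hx ⊢
        exact hx
      · simpa using hx0
    · rintro ⟨z, ⟨hz, hz0⟩, rfl⟩
      refine ⟨?_, by simpa using hz0⟩
      simp only [Set.mem_setOf_eq, Pi.neg_apply, neg_sq] at hz ⊢
      exact hz
  have hunivpc : IsPathConnected (Set.univ : Set (Fin n → ℝ)) :=
    pathConnectedSpace_iff_univ.mp inferInstance
  have hpcpos : IsPathConnected
      {x ∈ {x : Fin (n+1) → ℝ | (x 0) ^ 2 - ∑ i : Fin n, (x i.succ) ^ 2 = 1} | 0 < x 0} := by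
    rw [hpos]; exact hunivpc.image hfc
  have hpcneg : IsPathConnected
      {x ∈ {x : Fin (n+1) → ℝ | (x 0) ^ 2 - ∑ i : Fin n, (x i.succ) ^ 2 = 1} | x 0 < 0} := by
    rw [hnegset]; exact hpcpos.image continuous_neg
  have hne : ∀ x ∈ {x : Fin (n+1) → ℝ | (x 0) ^ 2 - ∑ i : Fin n, (x i.succ) ^ 2 = 1},
      x 0 ≠ 0 := by
    intro x hx h0
    simp only [Set.mem_setOf_eq, h0] at hx
    have := hsumnn (fun i => x i.succ)
    nlinarith
  refine ⟨hpcpos, hpcneg, ?_, ?_, ?_⟩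
  · ext x
    simp only [Set.mem_union, Set.mem_setOf_eq, Set.mem_sep_iff]
    constructor
    · rintro (⟨h, -⟩ | ⟨h, -⟩) <;> exact h
    · intro h
      rcases lt_or_gt_of_ne (hne x h) with h0 | h0
      · exact Or.inr ⟨h, h0⟩
      · exact Or.inl ⟨h, h0⟩
  · rw [Set.disjoint_left]
    rintro x ⟨-, h1⟩ ⟨-, h2⟩
    exact absurd h1 (not_lt.mpr h2.le)
  · rintro x hx y hy hx0 hy0 ⟨γ, hγ⟩
    have hc : ContinuousOn (fun t => γ.extend t 0) (Set.Icc (0:ℝ) 1) :=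
      ((continuous_apply (0 : Fin (n+1))).comp γ.continuous_extend).continuousOn
    have h01 : (0:ℝ) ≤ 1 := zero_le_one
    have hivt := intermediate_value_Icc' h01 hc
    have h0mem : (0:ℝ) ∈ Set.Icc (γ.extend 1 0) (γ.extend 0 0) := by
      rw [γ.extend_zero, γ.extend_one]
      exact ⟨hy0.le, hx0.le⟩
    obtain ⟨t, ht, htv⟩ := hivt h0mem
    have hmem : γ.extend t ∈ {x : Fin (n+1) → ℝ | (x 0) ^ 2 - ∑ i : Fin n, (x i.succ) ^ 2 = 1} := by
      rw [Path.extend_apply γ ht]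
      exact hγ _
    exact hne _ hmem htv
end

section
/- Let Z be a 4-dimensional real vector space with a nondegenerate symmetric bilinear form of signature (3, 1), and let V₁ ⊆ Z be a fixed 2-dimensional positive definite subspace. Then the set of 2-dimensional positive definite subspaces V₃ ⊆ Z with V₁ ∩ V₃ = 0 is path-connected (as a subspace of the Grassmannian of 2-planes in Z). -/
open Module


lemma aux_quad_pos {A D C : ℝ} (hA : 0 < A) (hC : 0 < C) (h : D ^ 2 < A * C)
    (a b : ℝ) (hab : a ≠ 0 ∨ b ≠ 0) :
    0 < A * a ^ 2 + 2 * D * a * b + C * b ^ 2 := by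
  rcases eq_or_ne b 0 with rfl | hb
  · have ha : a ≠ 0 := hab.resolve_right (by simp)
    have : 0 < a ^ 2 := by positivity
    nlinarith
  · have hb2 : 0 < b ^ 2 := by positivity
    have h1 : 0 < (A * C - D ^ 2) * b ^ 2 := mul_pos (by nlinarith) hb2
    have h2 : 0 ≤ (A * a + D * b) ^ 2 := sq_nonneg _
    nlinarith

lemma aux_quad_disc {A D C : ℝ}
    (h : ∀ a b : ℝ, (a ≠ 0 ∨ b ≠ 0) → 0 < A * a ^ 2 + 2 * D * a * b + C * b ^ 2) :
    0 < A ∧ 0 < C ∧ D ^ 2 < A * C := by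
  have hA : 0 < A := by have := h 1 0 (Or.inl one_ne_zero); nlinarith
  have hC : 0 < C := by have := h 0 1 (Or.inr one_ne_zero); nlinarith
  refine ⟨hA, hC, ?_⟩
  have hv := h (-D) A (Or.inr hA.ne')
  nlinarith

lemma aux_interp {P D Q s : ℝ} (hP : 0 ≤ P) (hQ : 1 < Q)
    (hdisc : D ^ 2 < (1 + P) * (Q - 1)) (hs0 : 0 ≤ s) (hs1 : s ≤ 1) :
    (s * D) ^ 2 < (1 + s ^ 2 * P) * (Q - 1) := by
  rcases eq_or_ne s 0 with rfl | hs
  · simpa using by nlinarith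
  · have hs2 : 0 < s ^ 2 := by positivity
    have h1 : s ^ 2 * (D ^ 2) < s ^ 2 * ((1 + P) * (Q - 1)) :=
      mul_lt_mul_of_pos_left hdisc hs2
    have h2 : 0 ≤ (1 - s ^ 2) * (Q - 1) := mul_nonneg (by nlinarith) (by linarith)
    nlinarith

/-- A path given by an explicit parametrization over `[0,1]` yields a `JoinedIn`. -/
lemma aux_seg {X : Type*} [TopologicalSpace X] [AddCommGroup X] [Module ℝ X]
    [IsTopologicalAddGroup X] [ContinuousSMul ℝ X]
    (F : Set X) (g : ℝ → X) (hg : Continuous g)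
    (hmem : ∀ s ∈ Set.Icc (0:ℝ) 1, g s ∈ F) : JoinedIn F (g 0) (g 1) := by
  have h1 : JoinedIn (Set.Icc (0:ℝ) 1) 0 1 :=
    ((convex_Icc (0:ℝ) 1).isPathConnected ⟨0, by norm_num⟩).joinedIn
      0 (by norm_num) 1 (by norm_num)
  exact (h1.map hg).mono (by rintro x ⟨s, hs, rfl⟩; exact hmem s hs)


theorem aux_ortho {Z : Type*} [AddCommGroup Z] [Module ℝ Z] [FiniteDimensional ℝ Z]
    [TopologicalSpace Z] [IsTopologicalAddGroup Z] [ContinuousSMul ℝ Z] [T2Space Z]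
    (hdim : Module.finrank ℝ Z = 4)
    (B : Z →ₗ[ℝ] Z →ₗ[ℝ] ℝ)
    (hsymm : ∀ x y, B x y = B y x)
    (hsig : HasSignature B 3 1)
    (V₁ : Submodule ℝ Z)
    (hV₁ : Module.finrank ℝ V₁ = 2)
    (hV₁pos : ∀ v ∈ V₁, v ≠ 0 → 0 < B v v) :
    ∃ O : Submodule ℝ Z, ∃ e f : Z,
      IsCompl V₁ O ∧ e ∈ O ∧ f ∈ O ∧ B e e = 1 ∧ B f f = -1 ∧ B e f = 0 ∧ B f e = 0 ∧
      (∀ x ∈ O, ∀ v ∈ V₁, B v x = 0 ∧ B x v = 0) := by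
  classical
  obtain ⟨b, hborth, hbpos, hbneg⟩ := hsig
  have hV₁nn : ∀ v ∈ V₁, 0 ≤ B v v := by
    intro v hv
    rcases eq_or_ne v 0 with rfl | h
    · simp
    · exact (hV₁pos v hv h).le
  -- nondegeneracy of B
  have hBnd : ∀ x : Z, (∀ y, B x y = 0) → x = 0 := by
    intro x hx
    rw [← b.forall_coord_eq_zero_iff]
    intro j
    have h1 : B x (b j) = 0 := hx _
    conv_lhs at h1 => rw [← b.sum_repr x]
    rw [map_sum, LinearMap.sum_apply] at h1
    simp only [map_smul, LinearMap.smul_apply, smul_eq_mul] at h1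
    rw [Finset.sum_eq_single j (fun i _ hij => by rw [hborth i j hij, mul_zero])
      (fun h => absurd (Finset.mem_univ j) h)] at h1
    have hBj : B (b j) (b j) ≠ 0 := by
      rcases j with j | j
      · exact (hbpos j).ne'
      · exact (hbneg j).ne
    have := mul_eq_zero.mp h1
    simp only [Basis.coord_apply]
    tauto
  set O : Submodule ℝ Z := LinearMap.BilinForm.orthogonal B V₁ with hOdef
  have hrefl : LinearMap.BilinForm.IsRefl B := fun x y h => by rw [hsymm]; exact h
  have hOmem : ∀ x ∈ O, ∀ v ∈ V₁, B v x = 0 := fun x hx v hv => hx v hv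
  have hOmem' : ∀ x ∈ O, ∀ v ∈ V₁, B x v = 0 := fun x hx v hv => by
    rw [hsymm]; exact hx v hv
  have hrestr : (LinearMap.BilinForm.restrict B V₁).Nondegenerate := by
    refine (LinearMap.IsRefl.nondegenerate_iff_separatingLeft (B := LinearMap.BilinForm.restrict B V₁) (fun x y h => hrefl x y h)).mpr ?_
    rintro ⟨x, hx⟩ h
    rcases eq_or_ne x 0 with h0 | h0
    · exact Subtype.ext h0
    · have := h ⟨x, hx⟩
      rw [LinearMap.BilinForm.restrict_apply] at this
      exact absurd this (hV₁pos x hx h0).ne'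
  have hcompl : IsCompl V₁ O :=
    LinearMap.BilinForm.isCompl_orthogonal_of_restrict_nondegenerate (B := B) hrefl hrestr
  have hOdim : finrank ℝ O = 2 := by
    have h := Submodule.finrank_add_eq_of_isCompl hcompl
    rw [hV₁, hdim] at h
    omega
  -- nondegeneracy of B restricted to O
  have hOnd : ∀ x ∈ O, (∀ y ∈ O, B x y = 0) → x = 0 := by
    intro x hxO hxy
    apply hBnd
    intro y
    have hy : y ∈ V₁ ⊔ O := by rw [hcompl.sup_eq_top]; trivial
    obtain ⟨v, hv, w, hw, rfl⟩ := Submodule.mem_sup.mp hy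
    rw [map_add, hsymm x v, hOmem x hxO v hv, hxy w hw, add_zero]
  -- the positive 3-dim subspace
  set P3 : Submodule ℝ Z := Submodule.span ℝ (Set.range (b ∘ Sum.inl)) with hP3def
  have hP3pos : ∀ x ∈ P3, x ≠ 0 → 0 < B x x := by
    intro x hx hne
    obtain ⟨c, hc⟩ := (Submodule.mem_span_range_iff_exists_fun ℝ).mp hx
    simp only [Function.comp_apply] at hc
    have key : ∀ i : Fin 3, B (b (Sum.inl i)) x
        = c i * B (b (Sum.inl i)) (b (Sum.inl i)) := by
      intro i
      conv_lhs => rw [← hc]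
      rw [map_sum]
      simp only [map_smul, smul_eq_mul]
      rw [Finset.sum_eq_single i
        (fun j _ hji => by
          rw [hborth _ _ (fun hh => hji (Sum.inl.inj hh).symm), mul_zero])
        (fun h => absurd (Finset.mem_univ i) h)]
    have hxx : B x x = ∑ i : Fin 3, c i * (c i * B (b (Sum.inl i)) (b (Sum.inl i))) := by
      calc B x x = B (∑ i : Fin 3, c i • b (Sum.inl i)) x := by rw [hc]
        _ = ∑ i : Fin 3, c i * B (b (Sum.inl i)) x := by
            rw [map_sum, LinearMap.sum_apply]
            refine Finset.sum_congr rfl fun i _ => ?_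
            rw [map_smul, LinearMap.smul_apply, smul_eq_mul]
        _ = ∑ i : Fin 3, c i * (c i * B (b (Sum.inl i)) (b (Sum.inl i))) := by
            simp only [key]
    rw [hxx]
    have hcne : ∃ i, c i ≠ 0 := by
      by_contra hc0
      push_neg at hc0
      exact hne (by rw [← hc]; simp [hc0])
    obtain ⟨i0, hi0⟩ := hcne
    refine Finset.sum_pos' (fun i _ => by nlinarith [hbpos i, sq_nonneg (c i)])
      ⟨i0, Finset.mem_univ i0, ?_⟩
    have := mul_pos (mul_self_pos.mpr hi0) (hbpos i0)
    nlinarith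
  have hP3dim : finrank ℝ P3 = 3 := by
    rw [hP3def, finrank_span_eq_card (b.linearIndependent.comp Sum.inl Sum.inl_injective)]
    simp
  -- a negative vector in O
  have hOneg : ∃ x ∈ O, B x x < 0 := by
    by_contra hcon
    push_neg at hcon
    have hmem : b (Sum.inr 0) ∈ V₁ ⊔ O := by rw [hcompl.sup_eq_top]; trivial
    obtain ⟨v, hv, w, hw, hvw⟩ := Submodule.mem_sup.mp hmem
    have hneg := hbneg 0
    rw [← hvw] at hneg
    simp only [map_add, LinearMap.add_apply] at hneg
    rw [hOmem w hw v hv, hOmem' w hw v hv] at hneg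
    have h1 := hV₁nn v hv
    have h2 := hcon w hw
    linarith
  obtain ⟨f', hf'O, hf'neg⟩ := hOneg
  have hf'ne : f' ≠ 0 := by rintro rfl; simp at hf'neg
  have hnotle : ¬ (O ≤ ℝ ∙ f') := by
    intro hle
    have h1 := Submodule.finrank_mono hle
    rw [finrank_span_singleton hf'ne, hOdim] at h1
    omega
  obtain ⟨x0, hx0O, hx0s⟩ := SetLike.not_le_iff_exists.mp hnotle
  clear hnotle
  set e' : Z := x0 - (B x0 f' / B f' f') • f' with he'def
  have he'O : e' ∈ O := sub_mem hx0O (Submodule.smul_mem _ _ hf'O)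
  have hf'e' : B f' e' = 0 := by
    rw [he'def]
    simp only [map_sub, map_smul, smul_eq_mul]
    rw [hsymm f' x0]
    have hne' : B f' f' ≠ 0 := hf'neg.ne
    field_simp
    simp
  have he'f' : B e' f' = 0 := by rw [hsymm]; exact hf'e'
  have he'ne : e' ≠ 0 := by
    intro h
    apply hx0s
    rw [Submodule.mem_span_singleton]
    exact ⟨B x0 f' / B f' f', (sub_eq_zero.mp (he'def ▸ h)).symm⟩
  have hpair' : LinearIndependent ℝ ![e', f'] := by
    rw [LinearIndependent.pair_iff]
    intro s t hst
    have h1 : B (s • e' + t • f') f' = 0 := by rw [hst]; simp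
    simp only [map_add, LinearMap.add_apply, map_smul, LinearMap.smul_apply,
      smul_eq_mul, he'f'] at h1
    have ht : t = 0 := by
      rcases mul_eq_zero.mp (by linarith : t * B f' f' = 0) with h | h
      · exact h
      · exact absurd h hf'neg.ne
    subst ht
    simp only [zero_smul, add_zero] at hst
    exact ⟨(smul_eq_zero.mp hst).resolve_right he'ne, rfl⟩
  have hspan' : Submodule.span ℝ (Set.range ![e', f']) = O := by
    apply Submodule.eq_of_le_of_finrank_le
    · rw [Submodule.span_le, Matrix.range_cons_cons_empty, Set.insert_subset_iff,
        Set.singleton_subset_iff]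
      exact ⟨he'O, hf'O⟩
    · rw [hOdim, finrank_span_eq_card hpair']
      simp
  have he'pos : 0 < B e' e' := by
    rcases lt_trichotomy (B e' e') 0 with hlt | heq | hgt
    · exfalso
      have hneg : ∀ y ∈ O, y ≠ 0 → B y y < 0 := by
        intro y hy hyne
        have hmem : y ∈ Submodule.span ℝ (Set.range ![e', f']) := hspan' ▸ hy
        rw [Matrix.range_cons_cons_empty, Submodule.mem_span_pair] at hmem
        obtain ⟨a, c, rfl⟩ := hmem
        have hac : a ≠ 0 ∨ c ≠ 0 := by
          by_contra h
          push_neg at h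
          exact hyne (by simp [h.1, h.2])
        have hexp : B (a • e' + c • f') (a • e' + c • f')
            = a ^ 2 * B e' e' + c ^ 2 * B f' f' := by
          simp only [map_add, LinearMap.add_apply, map_smul, LinearMap.smul_apply,
            smul_eq_mul, he'f', hf'e']
          ring
        rw [hexp]
        rcases hac with h | h
        · nlinarith [sq_nonneg c, mul_pos (mul_self_pos.mpr h) (neg_pos.mpr hlt)]
        · nlinarith [sq_nonneg a, mul_pos (mul_self_pos.mpr h) (neg_pos.mpr hf'neg)]
      have hinf : P3 ⊓ O ≠ ⊥ := by
        intro hbot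
        have h1 := Submodule.finrank_sup_add_finrank_inf_eq P3 O
        rw [hbot, hP3dim, hOdim] at h1
        have h2 : finrank ℝ ↥(P3 ⊔ O) ≤ 4 := hdim ▸ Submodule.finrank_le _
        rw [finrank_bot] at h1
        omega
      obtain ⟨y, hyI, hyne⟩ := (Submodule.ne_bot_iff _).mp hinf
      exact absurd (hP3pos y (Submodule.mem_inf.mp hyI).1 hyne)
        (not_lt.mpr (hneg y (Submodule.mem_inf.mp hyI).2 hyne).le)
    · exfalso
      apply he'ne
      apply hOnd e' he'O
      intro y hy
      have hmem : y ∈ Submodule.span ℝ (Set.range ![e', f']) := hspan' ▸ hy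
      rw [Matrix.range_cons_cons_empty, Submodule.mem_span_pair] at hmem
      obtain ⟨a, c, rfl⟩ := hmem
      simp only [map_add, map_smul, smul_eq_mul, he'f', heq]
      ring
    · exact hgt
  -- normalization
  set se := Real.sqrt (B e' e') with hse
  set sf := Real.sqrt (-(B f' f')) with hsf
  have hsepos : 0 < se := Real.sqrt_pos.mpr he'pos
  have hsfpos : 0 < sf := Real.sqrt_pos.mpr (by linarith)
  have hse2 : se * se = B e' e' := Real.mul_self_sqrt he'pos.le
  have hsf2 : sf * sf = -(B f' f') := Real.mul_self_sqrt (by linarith)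
  refine ⟨O, se⁻¹ • e', sf⁻¹ • f', hcompl, Submodule.smul_mem _ _ he'O,
    Submodule.smul_mem _ _ hf'O, ?_, ?_, ?_, ?_, fun x hx v hv => ⟨hOmem x hx v hv, hOmem' x hx v hv⟩⟩
  · simp only [map_smul, LinearMap.smul_apply, smul_eq_mul]
    rw [← hse2]
    field_simp
  · simp only [map_smul, LinearMap.smul_apply, smul_eq_mul]
    rw [show B f' f' = -(sf * sf) by linarith]
    field_simp
  · simp only [map_smul, LinearMap.smul_apply, smul_eq_mul, he'f']
    ring
  · simp only [map_smul, LinearMap.smul_apply, smul_eq_mul, hf'e']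
    ring

set_option maxHeartbeats 1600000 in
/-- Let `Z` be a 4-dimensional real quadratic space of signature `(3, 1)` (with its canonical
Hausdorff vector-space topology) and `V₁ ⊆ Z` a fixed 2-dimensional positive definite
subspace.  The set of 2-dimensional positive definite subspaces `V₃ ⊆ Z` with
`V₁ ∩ V₃ = 0` is path-connected in the Grassmannian of 2-planes: any two such subspaces
`N₀, N₁` are joined by a path in the Grassmannian staying in this set.  Since `[0,1]` is
contractible, such a path lifts to a continuous family of frames; the statement is phrased
via this equivalent frame formulation. -/
theorem stmt11 {Z : Type*} [AddCommGroup Z] [Module ℝ Z] [FiniteDimensional ℝ Z]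
    [TopologicalSpace Z] [IsTopologicalAddGroup Z] [ContinuousSMul ℝ Z] [T2Space Z]
    (hdim : Module.finrank ℝ Z = 4)
    (B : Z →ₗ[ℝ] Z →ₗ[ℝ] ℝ)
    (hsymm : ∀ x y, B x y = B y x)
    (hsig : HasSignature B 3 1)
    (V₁ : Submodule ℝ Z)
    (hV₁ : Module.finrank ℝ V₁ = 2)
    (hV₁pos : ∀ v ∈ V₁, v ≠ 0 → 0 < B v v)
    (N₀ N₁ : Submodule ℝ Z)
    (hN₀ : Module.finrank ℝ N₀ = 2 ∧ (∀ v ∈ N₀, v ≠ 0 → 0 < B v v) ∧ V₁ ⊓ N₀ = ⊥)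
    (hN₁ : Module.finrank ℝ N₁ = 2 ∧ (∀ v ∈ N₁, v ≠ 0 → 0 < B v v) ∧ V₁ ⊓ N₁ = ⊥) :
    ∃ γ : ℝ → Fin 2 → Z, Continuous γ ∧
      (∀ t ∈ Set.Icc (0 : ℝ) 1, LinearIndependent ℝ (γ t) ∧
        (∀ v ∈ Submodule.span ℝ (Set.range (γ t)), v ≠ 0 → 0 < B v v) ∧
        V₁ ⊓ Submodule.span ℝ (Set.range (γ t)) = ⊥) ∧
      Submodule.span ℝ (Set.range (γ 0)) = N₀ ∧
      Submodule.span ℝ (Set.range (γ 1)) = N₁ := by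
  classical
  obtain ⟨hN₀dim, hN₀pos, hN₀inf⟩ := hN₀
  obtain ⟨hN₁dim, hN₁pos, hN₁inf⟩ := hN₁
  obtain ⟨O, e, f, hcompl, heO, hfO, hee, hff, hef, hfe, horth⟩ :=
    aux_ortho hdim B hsymm hsig V₁ hV₁ hV₁pos
  have hV₁nn : ∀ v ∈ V₁, 0 ≤ B v v := by
    intro v hv
    rcases eq_or_ne v 0 with rfl | h
    · simp
    · exact (hV₁pos v hv h).le
  have hpair : LinearIndependent ℝ ![e, f] := by
    rw [LinearIndependent.pair_iff]
    intro s t hst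
    have h1 : B (s • e + t • f) e = 0 := by rw [hst]; simp
    have h2 : B (s • e + t • f) f = 0 := by rw [hst]; simp
    simp only [map_add, LinearMap.add_apply, map_smul, LinearMap.smul_apply,
      smul_eq_mul, hee, hff, hef, hfe] at h1 h2
    constructor <;> linarith
  have hexp : ∀ u ∈ V₁, ∀ v ∈ V₁, ∀ a c : ℝ,
      B (a • e + c • f + (a • u + c • v)) (a • e + c • f + (a • u + c • v)) =
        (1 + B u u) * a ^ 2 + 2 * (B u v) * a * c + (B v v - 1) * c ^ 2 := by
    intro u hu v hv a c
    have h1 : B u e = 0 := (horth e heO u hu).1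
    have h2 : B e u = 0 := (horth e heO u hu).2
    have h3 : B u f = 0 := (horth f hfO u hu).1
    have h4 : B f u = 0 := (horth f hfO u hu).2
    have h5 : B v e = 0 := (horth e heO v hv).1
    have h6 : B e v = 0 := (horth e heO v hv).2
    have h7 : B v f = 0 := (horth f hfO v hv).1
    have h8 : B f v = 0 := (horth f hfO v hv).2
    have h9 : B v u = B u v := hsymm v u
    simp only [map_add, LinearMap.add_apply, map_smul, LinearMap.smul_apply, smul_eq_mul,
      hee, hff, hef, hfe, h1, h2, h3, h4, h5, h6, h7, h8, h9]
    ring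
  have hindN : ∀ u ∈ V₁, ∀ v ∈ V₁, LinearIndependent ℝ ![e + u, f + v] := by
    intro u hu v hv
    rw [LinearIndependent.pair_iff]
    intro s t hst
    have hO1 : s • e + t • f ∈ O :=
      add_mem (Submodule.smul_mem _ _ heO) (Submodule.smul_mem _ _ hfO)
    have hV1 : s • e + t • f ∈ V₁ := by
      have h0 : s • e + t • f + (s • u + t • v) = 0 := by
        calc s • e + t • f + (s • u + t • v) = s • (e + u) + t • (f + v) := by module
          _ = 0 := hst
      have heq : s • e + t • f = -(s • u + t • v) := eq_neg_of_add_eq_zero_left h0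
      rw [heq]
      exact neg_mem (add_mem (Submodule.smul_mem _ _ hu) (Submodule.smul_mem _ _ hv))
    have h0 : s • e + t • f = 0 := by
      have hmem := Submodule.mem_inf.mpr ⟨hV1, hO1⟩
      rw [hcompl.inf_eq_bot] at hmem
      exact (Submodule.mem_bot ℝ).mp hmem
    exact LinearIndependent.pair_iff.mp hpair s t h0
  have hspanN : ∀ (N : Submodule ℝ Z), finrank ℝ N = 2 → ∀ u ∈ V₁, ∀ v ∈ V₁,
      e + u ∈ N → f + v ∈ N → Submodule.span ℝ (Set.range ![e + u, f + v]) = N := by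
    intro N hNdim u hu v hv hx hy
    apply Submodule.eq_of_le_of_finrank_le
    · rw [Submodule.span_le, Matrix.range_cons_cons_empty, Set.insert_subset_iff,
        Set.singleton_subset_iff]
      exact ⟨hx, hy⟩
    · rw [hNdim, finrank_span_eq_card (hindN u hu v hv)]
      simp
  have hNco : ∀ (N : Submodule ℝ Z), finrank ℝ N = 2 → V₁ ⊓ N = ⊥ →
      ∃ u v : Z, u ∈ V₁ ∧ v ∈ V₁ ∧ e + u ∈ N ∧ f + v ∈ N := by
    intro N hNdim hNinf
    have hsup : V₁ ⊔ N = ⊤ := by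
      apply Submodule.eq_top_of_finrank_eq
      have h1 := Submodule.finrank_sup_add_finrank_inf_eq V₁ N
      rw [hNinf, finrank_bot, hV₁, hNdim] at h1
      rw [hdim]
      omega
    have he2 : e ∈ V₁ ⊔ N := by rw [hsup]; trivial
    have hf2 : f ∈ V₁ ⊔ N := by rw [hsup]; trivial
    obtain ⟨p, hp, n, hn, hpn⟩ := Submodule.mem_sup.mp he2
    obtain ⟨q, hq, m, hm, hqm⟩ := Submodule.mem_sup.mp hf2
    refine ⟨-p, -q, neg_mem hp, neg_mem hq, ?_, ?_⟩
    · have h : e + -p = n := by rw [← hpn]; abel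
      rw [h]; exact hn
    · have h : f + -q = m := by rw [← hqm]; abel
      rw [h]; exact hm
  obtain ⟨u₀, v₀, hu₀, hv₀, hx₀, hy₀⟩ := hNco N₀ hN₀dim hN₀inf
  obtain ⟨u₁, v₁, hu₁, hv₁, hx₁, hy₁⟩ := hNco N₁ hN₁dim hN₁inf
  set S : Set (Z × Z) := {w | w.1 ∈ V₁ ∧ w.2 ∈ V₁ ∧ 1 < B w.2 w.2 ∧
    (B w.1 w.2) ^ 2 < (1 + B w.1 w.1) * (B w.2 w.2 - 1)} with hSdef
  have hSmem : ∀ (N : Submodule ℝ Z), (∀ z ∈ N, z ≠ 0 → 0 < B z z) →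
      ∀ u, u ∈ V₁ → ∀ v, v ∈ V₁ → e + u ∈ N → f + v ∈ N → (u, v) ∈ S := by
    intro N hNpos u hu v hv hx hy
    have hcross : ∀ a c : ℝ, (a ≠ 0 ∨ c ≠ 0) →
        0 < (1 + B u u) * a ^ 2 + 2 * (B u v) * a * c + (B v v - 1) * c ^ 2 := by
      intro a c hac
      have hz : a • (e + u) + c • (f + v) = a • e + c • f + (a • u + c • v) := by module
      have hzN : a • (e + u) + c • (f + v) ∈ N :=
        add_mem (Submodule.smul_mem _ _ hx) (Submodule.smul_mem _ _ hy)
      have hzne : a • (e + u) + c • (f + v) ≠ 0 := by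
        intro h0
        obtain ⟨ha, hc⟩ := LinearIndependent.pair_iff.mp (hindN u hu v hv) a c h0
        tauto
      have hpos := hNpos _ hzN hzne
      rw [hz, hexp u hu v hv a c] at hpos
      exact hpos
    obtain ⟨hh1, hh2, hh3⟩ := aux_quad_disc hcross
    exact ⟨hu, hv, by linarith, hh3⟩
  have hS₀ : (u₀, v₀) ∈ S := hSmem N₀ hN₀pos u₀ hu₀ v₀ hv₀ hx₀ hy₀
  have hS₁ : (u₁, v₁) ∈ S := hSmem N₁ hN₁pos u₁ hu₁ v₁ hv₁ hx₁ hy₁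
  set T : Set Z := {v | v ∈ V₁ ∧ 1 < B v v} with hTdef
  have hTsub : ∀ v ∈ T, ((0:Z), v) ∈ S := by
    rintro v ⟨hv1, hv2⟩
    refine ⟨Submodule.zero_mem _, hv1, hv2, ?_⟩
    simp only [map_zero, LinearMap.zero_apply]
    nlinarith
  have hjRay : ∀ v ∈ T, ∀ R : ℝ, 1 ≤ R → JoinedIn T v (R • v) := by
    rintro v ⟨hv1, hv2⟩ R hR
    have h := aux_seg T (fun s => (1 + s * (R - 1)) • v)
      ((continuous_const.add (continuous_id.mul continuous_const)).smul continuous_const)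
      (fun s hs => by
        obtain ⟨hs0, hs1⟩ := hs
        have hco : 1 ≤ 1 + s * (R - 1) := by nlinarith
        refine ⟨Submodule.smul_mem _ _ hv1, ?_⟩
        simp only [map_smul, LinearMap.smul_apply, smul_eq_mul]
        nlinarith [hv2, mul_le_mul hco hco zero_le_one (by linarith)])
    norm_num at h
    exact h
  have hjSeg : ∀ v w : Z, v ∈ T → w ∈ T →
      (∀ s ∈ Set.Icc (0:ℝ) 1, (1 - s) • v + s • w ≠ 0) → JoinedIn T v w := by
    intro v w hvT hwT hne
    obtain ⟨hv1, hv2⟩ := hvT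
    obtain ⟨hw1, hw2⟩ := hwT
    set g : ℝ → ℝ := fun s =>
      (1 - s) ^ 2 * B v v + 2 * (s * (1 - s)) * B v w + s ^ 2 * B w w with hgdef
    have hgB : ∀ s : ℝ, B ((1 - s) • v + s • w) ((1 - s) • v + s • w) = g s := by
      intro s
      have h9 : B w v = B v w := hsymm w v
      simp only [map_add, LinearMap.add_apply, map_smul, LinearMap.smul_apply,
        smul_eq_mul, h9, hgdef]
      ring
    have hgc : Continuous g := by fun_prop
    obtain ⟨s₀, hs₀, hmin⟩ := isCompact_Icc.exists_isMinOn
      (Set.nonempty_Icc.mpr zero_le_one) hgc.continuousOn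
    set m := g s₀ with hmdef
    have hmpos : 0 < m := by
      rw [hmdef, ← hgB s₀]
      refine hV₁pos _ ?_ (hne s₀ hs₀)
      exact add_mem (Submodule.smul_mem _ _ hv1) (Submodule.smul_mem _ _ hw1)
    set R : ℝ := 1 / m + 1 with hRdef
    have hR1 : 1 ≤ R := by
      have : 0 < 1 / m := by positivity
      rw [hRdef]; linarith
    have hRm : 1 < R ^ 2 * m := by
      have h1 : R * m = 1 + m := by rw [hRdef]; field_simp
      nlinarith
    have j1 : JoinedIn T v (R • v) := hjRay v ⟨hv1, hv2⟩ R hR1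
    have j2 : JoinedIn T w (R • w) := hjRay w ⟨hw1, hw2⟩ R hR1
    have j3 : JoinedIn T (R • v) (R • w) := by
      have h := aux_seg T (fun s => R • ((1 - s) • v + s • w))
        (continuous_const.smul (((continuous_const.sub continuous_id).smul continuous_const).add
          (continuous_id.smul continuous_const)))
        (fun s hs => by
          refine ⟨Submodule.smul_mem _ _
            (add_mem (Submodule.smul_mem _ _ hv1) (Submodule.smul_mem _ _ hw1)), ?_⟩
          have hgs : m ≤ g s := (isMinOn_iff.mp hmin) s hs
          simp only [map_smul, LinearMap.smul_apply, smul_eq_mul]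
          rw [hgB s]
          nlinarith)
      norm_num at h
      exact h
    exact (j1.trans j3).trans j2.symm
  have hjT : ∀ v w : Z, v ∈ T → w ∈ T → JoinedIn T v w := by
    intro v w hvT hwT
    have hvne : v ≠ 0 := by rintro rfl; have := hvT.2; norm_num at this
    have hwne : w ≠ 0 := by rintro rfl; have := hwT.2; norm_num at this
    by_cases hcase : ∀ s ∈ Set.Icc (0:ℝ) 1, (1 - s) • v + s • w ≠ 0
    · exact hjSeg v w hvT hwT hcase
    · push_neg at hcase
      obtain ⟨s₀, hs₀, hzero⟩ := hcase
      have hs₀ne : s₀ ≠ 0 := by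
        rintro rfl
        simp only [sub_zero, one_smul, zero_smul, add_zero] at hzero
        exact hvne hzero
      have hwspan : w ∈ (ℝ ∙ v : Submodule ℝ Z) := by
        rw [Submodule.mem_span_singleton]
        have h3 := congrArg (fun z : Z => s₀⁻¹ • z) hzero
        simp only [smul_add, smul_smul, smul_zero] at h3
        rw [inv_mul_cancel₀ hs₀ne, one_smul] at h3
        exact ⟨-(s₀⁻¹ * (1 - s₀)), by
          rw [neg_smul]
          exact (eq_neg_of_add_eq_zero_right h3).symm⟩
      have hnotle2 : ¬ (V₁ ≤ (ℝ ∙ v : Submodule ℝ Z)) := fun hle => by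
        have h1 := Submodule.finrank_mono hle
        rw [hV₁, finrank_span_singleton hvne] at h1
        omega
      obtain ⟨w', hw'V, hw's⟩ := SetLike.not_le_iff_exists.mp hnotle2
      clear hnotle2
      have hw'ne : w' ≠ 0 := fun h => hw's (h ▸ Submodule.zero_mem _)
      have hw'pos : 0 < B w' w' := hV₁pos w' hw'V hw'ne
      set R' : ℝ := Real.sqrt (2 / B w' w') with hR'def
      have hR'pos : 0 < R' := Real.sqrt_pos.mpr (by positivity)
      set W : Z := R' • w' with hWdef
      have hWV : W ∈ V₁ := Submodule.smul_mem _ _ hw'V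
      have hWB : B W W = 2 := by
        rw [hWdef]
        simp only [map_smul, LinearMap.smul_apply, smul_eq_mul]
        have hm2 : R' * R' = 2 / B w' w' := Real.mul_self_sqrt (by positivity)
        rw [show R' * (R' * B w' w') = (R' * R') * B w' w' by ring, hm2]
        exact div_mul_cancel₀ 2 hw'pos.ne'
      have hWT : W ∈ T := ⟨hWV, by rw [hWB]; norm_num⟩
      have hWs : W ∉ (ℝ ∙ v : Submodule ℝ Z) := by
        intro h
        apply hw's
        have hw' : w' = R'⁻¹ • W := by
          rw [hWdef, smul_smul, inv_mul_cancel₀ hR'pos.ne', one_smul]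
        rw [hw']
        exact Submodule.smul_mem _ _ h
      have hseg1 : ∀ s ∈ Set.Icc (0:ℝ) 1, (1 - s) • v + s • W ≠ 0 := by
        intro s hs h0
        rcases eq_or_ne s 0 with rfl | hsne
        · simp only [sub_zero, one_smul, zero_smul, add_zero] at h0
          exact hvne h0
        · apply hWs
          rw [Submodule.mem_span_singleton]
          have h3 := congrArg (fun z : Z => s⁻¹ • z) h0
          simp only [smul_add, smul_smul, smul_zero] at h3
          rw [inv_mul_cancel₀ hsne, one_smul] at h3
          exact ⟨-(s⁻¹ * (1 - s)), by
            rw [neg_smul]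
            exact (eq_neg_of_add_eq_zero_right h3).symm⟩
      have hseg2 : ∀ s ∈ Set.Icc (0:ℝ) 1, (1 - s) • W + s • w ≠ 0 := by
        intro s hs h0
        rcases eq_or_ne s 1 with rfl | hsne
        · simp only [sub_self, zero_smul, one_smul, zero_add] at h0
          exact hwne h0
        · have h1s : (1:ℝ) - s ≠ 0 := sub_ne_zero.mpr (Ne.symm hsne)
          apply hWs
          have h3 := congrArg (fun z : Z => (1 - s)⁻¹ • z) h0
          simp only [smul_add, smul_smul, smul_zero] at h3
          rw [inv_mul_cancel₀ h1s, one_smul] at h3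
          have hWeq : W = -(((1 - s)⁻¹ * s) • w) := eq_neg_of_add_eq_zero_left h3
          rw [hWeq]
          exact neg_mem (Submodule.smul_mem _ _ hwspan)
      exact (hjSeg v W hvT hWT hseg1).trans (hjSeg W w hWT hwT hseg2)
  have hjS1 : ∀ u v : Z, (u, v) ∈ S → JoinedIn S (u, v) ((0:Z), v) := by
    rintro u v ⟨hu, hv, hQ, hdisc⟩
    have h := aux_seg S (fun s => ((1 - s) • u, v))
      (((continuous_const.sub continuous_id).smul continuous_const).prodMk continuous_const)
      (fun s hs => by
        obtain ⟨hs0, hs1⟩ := hs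
        refine ⟨Submodule.smul_mem _ _ hu, hv, hQ, ?_⟩
        simp only [map_smul, LinearMap.smul_apply, smul_eq_mul]
        have h2 := aux_interp (hV₁nn u hu) hQ hdisc
          (by linarith : (0:ℝ) ≤ 1 - s) (by linarith : 1 - s ≤ 1)
        nlinarith [h2])
    norm_num at h
    exact h
  have hjS : JoinedIn S (u₀, v₀) (u₁, v₁) := by
    have j1 := hjS1 u₀ v₀ hS₀
    have j2 := hjS1 u₁ v₁ hS₁
    have jmid : JoinedIn S ((0:Z), v₀) ((0:Z), v₁) := by
      have hT₀ : v₀ ∈ T := ⟨hv₀, hS₀.2.2.1⟩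
      have hT₁ : v₁ ∈ T := ⟨hv₁, hS₁.2.2.1⟩
      have h := (hjT v₀ v₁ hT₀ hT₁).map (f := fun z : Z => ((0:Z), z))
        (continuous_const.prodMk continuous_id)
      exact h.mono (by rintro x ⟨z, hz, rfl⟩; exact hTsub z hz)
    exact (j1.trans jmid).trans j2.symm
  obtain ⟨p, hp⟩ := hjS
  have hpmem : ∀ t : ℝ, p.extend t ∈ S := fun t => hp (Set.projIcc 0 1 zero_le_one t)
  refine ⟨fun t => ![e + (p.extend t).1, f + (p.extend t).2], ?_, ?_, ?_, ?_⟩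
  · have hc := p.continuous_extend
    refine continuous_pi fun i => ?_
    fin_cases i
    · simp only [Matrix.cons_val_zero]
      exact continuous_const.add (continuous_fst.comp hc)
    · simp only [Matrix.cons_val_one, Matrix.head_cons]
      exact continuous_const.add (continuous_snd.comp hc)
  · intro t ht
    obtain ⟨hu, hv, hQ, hdisc⟩ := hpmem t
    set u := (p.extend t).1 with hudef
    set v := (p.extend t).2 with hvdef
    have hptpos : ∀ a c : ℝ, (a ≠ 0 ∨ c ≠ 0) →
        0 < B (a • (e + u) + c • (f + v)) (a • (e + u) + c • (f + v)) := by
      intro a c hac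
      have hz : a • (e + u) + c • (f + v) = a • e + c • f + (a • u + c • v) := by module
      rw [hz, hexp u hu v hv a c]
      exact aux_quad_pos (by nlinarith [hV₁nn u hu]) (by linarith) hdisc a c hac
    refine ⟨hindN u hu v hv, ?_, ?_⟩
    · intro z hz hzne
      rw [Matrix.range_cons_cons_empty, Submodule.mem_span_pair] at hz
      obtain ⟨a, c, rfl⟩ := hz
      have hac : a ≠ 0 ∨ c ≠ 0 := by
        by_contra h
        push_neg at h
        exact hzne (by simp [h.1, h.2])
      exact hptpos a c hac
    · rw [eq_bot_iff]
      intro z hz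
      rw [Submodule.mem_inf] at hz
      obtain ⟨hzV, hzsp⟩ := hz
      rw [Matrix.range_cons_cons_empty, Submodule.mem_span_pair] at hzsp
      obtain ⟨a, c, hac⟩ := hzsp
      have hOf : a • e + c • f ∈ O :=
        add_mem (Submodule.smul_mem _ _ heO) (Submodule.smul_mem _ _ hfO)
      have hVf : a • e + c • f ∈ V₁ := by
        have heq : a • e + c • f = z - (a • u + c • v) := by rw [← hac]; module
        rw [heq]
        exact sub_mem hzV (add_mem (Submodule.smul_mem _ _ hu) (Submodule.smul_mem _ _ hv))
      have h0 : a • e + c • f = 0 := by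
        have hmem := Submodule.mem_inf.mpr ⟨hVf, hOf⟩
        rw [hcompl.inf_eq_bot] at hmem
        exact (Submodule.mem_bot ℝ).mp hmem
      obtain ⟨ha, hc⟩ := LinearIndependent.pair_iff.mp hpair a c h0
      rw [Submodule.mem_bot, ← hac, ha, hc]
      simp
  · show Submodule.span ℝ (Set.range ![e + (p.extend 0).1, f + (p.extend 0).2]) = N₀
    rw [p.extend_zero]
    exact hspanN N₀ hN₀dim u₀ hu₀ v₀ hv₀ hx₀ hy₀
  · show Submodule.span ℝ (Set.range ![e + (p.extend 1).1, f + (p.extend 1).2]) = N₁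
    rw [p.extend_one]
    exact hspanN N₁ hN₁dim u₁ hu₁ v₁ hv₁ hx₁ hy₁
end
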